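/- Let C ⊆ F_q^n be an [n, k, d] linear code admitting a partition of {1,...,n} into parts of size ℓ+1 such that on each part the restriction of C has a parity check (local recoverability with disjoint recovery sets of locality ℓ). If C is the Tamo–Barg code with parameters as above, then d = n - k - k/ℓ + 2, i.e., C meets the Singleton-type bound d ≤ n - k - ⌈k/ℓ⌉ + 2 for locally recoverable codes with equality. -/

import Mathlib

open Polynomial

/-- The minimum (Hamming) distance of a linear code. -/
noncomputable def minDist {F : Type*} {ι : Type*} [Fintype ι] [Field F] [DecidableEq F]
    (C : Submodule F (ι → F)) : ℕ :=
  sInf {w | ∃ c ∈ C, c ≠ 0 ∧ hammingNorm c = w}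

/-- Evaluation at the points of a finite set `A ⊆ F`, as a linear map on polynomials. -/
noncomputable def evalOn {F : Type*} [Field F] (A : Finset F) :
    Polynomial F →ₗ[F] (↥A → F) :=
  LinearMap.pi fun a : ↥A => (Polynomial.aeval (a : F)).toLinearMap

/-- The space of functions evaluated in the Tamo–Barg construction: the span of the
monomials `Xⁱ gʲ` for `i < ℓ`, `j < k/ℓ`. -/
noncomputable def tbSpace {F : Type*} [Field F] (ℓ k : ℕ) (g : Polynomial F) :
    Submodule F (Polynomial F) :=
  Submodule.span F {p | ∃ i < ℓ, ∃ j < k / ℓ, p = X ^ i * g ^ j}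

section Aux

variable {F : Type*} [Field F] [DecidableEq F]

lemma weight_eval (A : Finset F) (p : F[X]) :
    hammingNorm (evalOn A p) = (A.filter (fun a => p.eval a ≠ 0)).card := by
  have h1 : ∀ a : ↥A, evalOn A p a = p.eval ↑a := by
    intro a; simp [evalOn]
  rw [hammingNorm]
  rw [show ({i | evalOn A p i ≠ 0} : Finset ↥A) = Finset.univ.filter (fun a : ↥A => p.eval ↑a ≠ 0) by
    simp [h1]]
  rw [Finset.univ_eq_attach, Finset.filter_attach (fun a => p.eval a ≠ 0) A, Finset.card_map,
    Finset.card_attach]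

lemma card_zeros_le (A : Finset F) (p : F[X]) (hp : p ≠ 0) :
    (A.filter (fun a => p.eval a = 0)).card ≤ p.natDegree := by
  calc (A.filter (fun a => p.eval a = 0)).card ≤ p.roots.toFinset.card := by
        apply Finset.card_le_card
        intro a ha
        simp only [Finset.mem_filter] at ha
        simp [Multiset.mem_toFinset, mem_roots, hp, IsRoot, ha.2]
    _ ≤ Multiset.card p.roots := p.roots.toFinset_card_le
    _ ≤ p.natDegree := p.card_roots'

omit [DecidableEq F] in
lemma tb_natDegree_le {ℓ k : ℕ} {g : F[X]} (hg : g.natDegree = ℓ + 1)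
    (hdvd : ℓ ∣ k) {p : F[X]} (hp : p ∈ tbSpace ℓ k g) : p.natDegree ≤ k + k / ℓ - 2 := by
  set t := k / ℓ with htd
  have hk : ℓ * t = k := Nat.mul_div_cancel' hdvd
  have : p ∈ degreeLE F ((k + t - 2 : ℕ) : WithBot ℕ) := by
    refine Submodule.span_le.mpr ?_ hp
    rintro q ⟨i, hi, j, hj, rfl⟩
    rw [SetLike.mem_coe, mem_degreeLE]
    refine le_trans (degree_le_natDegree) (Nat.cast_le.mpr ?_)
    have h1 : (X ^ i * g ^ j : F[X]).natDegree ≤ i + j * (ℓ + 1) := by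
      refine le_trans (natDegree_mul_le) ?_
      gcongr
      · exact le_of_eq (natDegree_X_pow i)
      · exact le_trans (natDegree_pow_le) (by rw [hg])
    refine le_trans h1 ?_
    have h2 : (j+1) * (ℓ+1) ≤ t * (ℓ+1) := Nat.mul_le_mul_right _ hj
    have h3 : i + j * (ℓ + 1) + 2 ≤ k + t := by nlinarith [hk, hi, h2]
    omega
  rw [mem_degreeLE] at this
  exact natDegree_le_iff_degree_le.mpr this

omit [DecidableEq F] in
lemma tb_mem {ℓ k : ℕ} (g : F[X]) {q r : F[X]}
    (hq : q.natDegree < ℓ) (hr : r.natDegree < k / ℓ) :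
    q * (Polynomial.aeval g r) ∈ tbSpace ℓ k g := by
  have hqe : q = ∑ i ∈ Finset.range ℓ, C (q.coeff i) * X ^ i := by
    conv_lhs => rw [q.as_sum_range' ℓ hq]
    simp [Polynomial.C_mul_X_pow_eq_monomial]
  have hre : (Polynomial.aeval g r : F[X]) = ∑ j ∈ Finset.range (k / ℓ), C (r.coeff j) * g ^ j := by
    rw [Polynomial.aeval_def, Polynomial.eval₂_eq_sum]
    rw [Polynomial.sum_over_range' _ (by simp) _ hr]
    simp [Polynomial.algebraMap_eq]
  rw [hqe, hre, Finset.sum_mul_sum]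
  refine Submodule.sum_mem _ fun i hi => Submodule.sum_mem _ fun j hj => ?_
  have : (C (q.coeff i) * X ^ i) * (C (r.coeff j) * g ^ j)
      = (q.coeff i * r.coeff j) • (X ^ i * g ^ j) := by
    rw [Polynomial.smul_eq_C_mul, map_mul]; ring
  rw [this]
  exact Submodule.smul_mem _ _ (Submodule.subset_span
    ⟨i, Finset.mem_range.mp hi, j, Finset.mem_range.mp hj, rfl⟩)

lemma tb_arith {ℓ t k : ℕ} (hℓ : 1 ≤ ℓ) (ht : 1 ≤ t) (hk : ℓ * t = k) :
    (ℓ - 1) + (t - 1) * (ℓ + 1) = k + t - 2 := by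
  obtain ⟨ℓ', rfl⟩ : ∃ ℓ', ℓ = ℓ' + 1 := ⟨ℓ - 1, by omega⟩
  obtain ⟨t', rfl⟩ : ∃ t', t = t' + 1 := ⟨t - 1, by omega⟩
  subst hk
  simp only [Nat.add_sub_cancel]
  ring_nf
  omega

end Aux

/-- Optimality of Tamo–Barg codes: the `[n, k]` Tamo–Barg code of locality `ℓ` has minimum
distance exactly `n - k - k/ℓ + 2`, i.e. it attains the Gopalan–Huang–Simitci bound
`d ≤ n - k - ⌈k/ℓ⌉ + 2` for locally recoverable codes with equality. -/
theorem tamoBarg_optimal {F : Type*} [Field F] [DecidableEq F] {n m ℓ k : ℕ}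
    (A : Finset F) (hAn : A.card = n)
    (P : Fin m → Finset F)
    (hcover : ∀ a, a ∈ A ↔ ∃ j, a ∈ P j)
    (hdisj : ∀ j j' : Fin m, j ≠ j' → Disjoint (P j) (P j'))
    (hPcard : ∀ j, (P j).card = ℓ + 1)
    (g : Polynomial F) (hg : g.natDegree = ℓ + 1)
    (hconst : ∀ j, ∀ a ∈ P j, ∀ b ∈ P j, g.eval a = g.eval b)
    (hℓ : 0 < ℓ) (hdvd : ℓ ∣ k) (hk0 : 0 < k) (hkn : k + k / ℓ ≤ n) :
    minDist (Submodule.map (evalOn A) (tbSpace ℓ k g)) = n - k - k / ℓ + 2 := by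
  classical
  set t := k / ℓ with htd
  have hk : ℓ * t = k := Nat.mul_div_cancel' hdvd
  have ht1 : 1 ≤ t := Nat.one_le_div_iff hℓ |>.mpr (Nat.le_of_dvd hk0 hdvd)
  -- the size of A
  have hA : A = Finset.univ.biUnion P := by
    ext a; simp [hcover a]
  have hnm : n = m * (ℓ + 1) := by
    rw [← hAn, hA, Finset.card_biUnion (fun j _ j' _ hjj => hdisj j j' hjj)]
    simp [hPcard, Finset.sum_const, mul_comm]
  -- t ≤ m
  have htm : t ≤ m := by
    have h1 : t * (ℓ + 1) ≤ m * (ℓ + 1) := by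
      have : t * (ℓ + 1) = k + t := by rw [← hk]; ring
      omega
    exact Nat.le_of_mul_le_mul_right h1 (by omega)
  -- g takes different values on different parts
  have hval : ∀ j j' : Fin m, j ≠ j' → ∀ a ∈ P j, ∀ a' ∈ P j', g.eval a ≠ g.eval a' := by
    intro j j' hjj a ha a' ha' heq
    set c := g.eval a with hc
    have hgc : (g - C c) ≠ 0 := by
      intro h
      have := natDegree_sub_C (p := g) (a := c)
      rw [h, natDegree_zero] at this
      omega
    have hsub : P j ∪ P j' ⊆ (g - C c).roots.toFinset := by
      intro x hx
      have hx0 : (g - C c).eval x = 0 := by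
        rcases Finset.mem_union.mp hx with hxj | hxj'
        · simp [hconst j x hxj a ha, hc]
        · simp [hconst j' x hxj' a' ha', ← heq, hc]
      simp [Multiset.mem_toFinset, mem_roots, hgc, IsRoot, hx0]
    have hcard : 2 * (ℓ + 1) ≤ ℓ + 1 := by
      calc 2 * (ℓ + 1) = (P j ∪ P j').card := by
            rw [Finset.card_union_of_disjoint (hdisj j j' hjj), hPcard, hPcard]; ring
        _ ≤ (g - C c).roots.toFinset.card := Finset.card_le_card hsub
        _ ≤ Multiset.card (g - C c).roots := (g - C c).roots.toFinset_card_le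
        _ ≤ (g - C c).natDegree := (g - C c).card_roots'
        _ = ℓ + 1 := by rw [natDegree_sub_C, hg]
    omega
  -- pick a point in each part
  have hPne : ∀ j, (P j).Nonempty := fun j => Finset.card_pos.mp (by rw [hPcard]; omega)
  set b : Fin m → F := fun j => (hPne j).choose with hbdef
  have hbP : ∀ j, b j ∈ P j := fun j => (hPne j).choose_spec
  -- the parts used for full roots, and the special part
  have hlastlt : t - 1 < m := by omega
  set jlast : Fin m := ⟨t - 1, hlastlt⟩ with hjlast
  set J : Finset (Fin m) :=
    (Finset.range (t - 1)).attachFin (fun x hx => by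
      have := Finset.mem_range.mp hx; omega) with hJdef
  have hJmem : ∀ j : Fin m, j ∈ J ↔ (j : ℕ) < t - 1 := by
    intro j; rw [hJdef, Finset.mem_attachFin, Finset.mem_range]
  have hJcard : J.card = t - 1 := by
    rw [hJdef, Finset.card_attachFin, Finset.card_range]
  have hJlast : jlast ∉ J := by
    rw [hJmem]; simp [hjlast]
  -- choose ℓ - 1 points in the special part
  obtain ⟨S, hSsub, hScard⟩ := Finset.exists_subset_card_eq (s := P jlast) (n := ℓ - 1)
    (by rw [hPcard]; omega)
  -- the minimum weight polynomial
  set q : F[X] := ∏ a ∈ S, (X - C a) with hqdef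
  set r : F[X] := ∏ j ∈ J, (X - C (g.eval (b j))) with hrdef
  set f : F[X] := q * (Polynomial.aeval g r) with hfdef
  have hq_ne : q ≠ 0 := Finset.prod_ne_zero_iff.mpr fun a _ => X_sub_C_ne_zero a
  have hq_deg : q.natDegree = ℓ - 1 := by
    rw [hqdef, natDegree_prod _ _ (fun a _ => X_sub_C_ne_zero a)]
    simp [natDegree_X_sub_C, hScard]
  have hr_deg : r.natDegree = t - 1 := by
    rw [hrdef, natDegree_prod _ _ (fun a _ => X_sub_C_ne_zero _)]
    simp [natDegree_X_sub_C, hJcard]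
  have hG : (Polynomial.aeval g r : F[X]) = ∏ j ∈ J, (g - C (g.eval (b j))) := by
    rw [hrdef, map_prod]
    refine Finset.prod_congr rfl fun j _ => ?_
    simp [Polynomial.algebraMap_eq]
  have hfac_ne : ∀ j : Fin m, (g - C (g.eval (b j))) ≠ 0 := by
    intro j h
    have := natDegree_sub_C (p := g) (a := g.eval (b j))
    rw [h, natDegree_zero] at this
    omega
  have hG_ne : (Polynomial.aeval g r : F[X]) ≠ 0 := by
    rw [hG]; exact Finset.prod_ne_zero_iff.mpr fun j _ => hfac_ne j
  have hf_ne : f ≠ 0 := mul_ne_zero hq_ne hG_ne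
  have hG_deg : (Polynomial.aeval g r : F[X]).natDegree = (t - 1) * (ℓ + 1) := by
    rw [hG, natDegree_prod _ _ (fun j _ => hfac_ne j)]
    simp [natDegree_sub_C, hg, hJcard, Finset.sum_const, mul_comm]
  have harith : (ℓ - 1) + (t - 1) * (ℓ + 1) = k + t - 2 := tb_arith hℓ ht1 hk
  have hf_deg : f.natDegree = k + t - 2 := by
    rw [hfdef, natDegree_mul hq_ne hG_ne, hq_deg, hG_deg, harith]
  have hf_mem : f ∈ tbSpace ℓ k g := tb_mem g (by omega) (by rw [hr_deg]; omega)
  -- the set of roots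
  set R : Finset F := (J.biUnion (fun j => P j)) ∪ S with hRdef
  have hRsub : R ⊆ A.filter (fun a => f.eval a = 0) := by
    intro a ha
    rw [Finset.mem_filter]
    rcases Finset.mem_union.mp ha with ha' | haS
    · obtain ⟨j, hjJ, haj⟩ := Finset.mem_biUnion.mp ha'
      refine ⟨(hcover a).mpr ⟨j, haj⟩, ?_⟩
      have hdvd2 : (g - C (g.eval (b j))) ∣ f := by
        rw [hfdef]
        exact Dvd.dvd.mul_left (hG ▸ Finset.dvd_prod_of_mem _ hjJ) q
      obtain ⟨u, hu⟩ := hdvd2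
      have hz : (g - C (g.eval (b j))).eval a = 0 := by
        simp [hconst j a haj (b j) (hbP j)]
      rw [hu, eval_mul, hz, zero_mul]
    · refine ⟨(hcover a).mpr ⟨jlast, hSsub haS⟩, ?_⟩
      have hdvd2 : (X - C a) ∣ f := by
        rw [hfdef]
        exact Dvd.dvd.mul_right (hqdef ▸ Finset.dvd_prod_of_mem _ haS) _
      obtain ⟨u, hu⟩ := hdvd2
      rw [hu, eval_mul]
      simp
  have hRcard : R.card = k + t - 2 := by
    have hdisjRS : Disjoint (J.biUnion (fun j => P j)) S := by
      rw [Finset.disjoint_biUnion_left]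
      intro j hjJ
      refine Finset.disjoint_of_subset_right hSsub (hdisj j jlast ?_)
      intro h
      rw [h] at hjJ
      exact hJlast hjJ
    rw [hRdef, Finset.card_union_of_disjoint hdisjRS,
      Finset.card_biUnion (fun j hj j' hj' hjj => hdisj j j' hjj)]
    simp only [hPcard, Finset.sum_const, smul_eq_mul, hJcard, hScard]
    omega
  -- exact count of zeros
  have hzeros : (A.filter (fun a => f.eval a = 0)).card = k + t - 2 := by
    refine le_antisymm (le_trans (card_zeros_le A f hf_ne) (le_of_eq hf_deg)) ?_
    rw [← hRcard]
    exact Finset.card_le_card hRsub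
  have hsplit : ∀ p : F[X],
      (A.filter (fun a => p.eval a ≠ 0)).card + (A.filter (fun a => p.eval a = 0)).card = n := by
    intro p
    have h := Finset.card_filter_add_card_filter_not (s := A) (p := fun a => p.eval a = 0)
    simp only [ne_eq] at h ⊢
    omega
  have hw0 : hammingNorm (evalOn A f) = n - (k + t - 2) := by
    rw [weight_eval A f]
    have := hsplit f
    omega
  have hcne : evalOn A f ≠ 0 := by
    intro h
    rw [h, hammingNorm_zero] at hw0
    omega
  set W : Set ℕ := {w | ∃ c ∈ Submodule.map (evalOn A) (tbSpace ℓ k g), c ≠ 0 ∧ hammingNorm c = w}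
    with hWdef
  have hmem : n - (k + t - 2) ∈ W := ⟨evalOn A f, Submodule.mem_map_of_mem hf_mem, hcne, hw0⟩
  have hlb : ∀ w ∈ W, n - (k + t - 2) ≤ w := by
    rintro w ⟨c, ⟨p, hp, rfl⟩, hc0, rfl⟩
    have hp0 : p ≠ 0 := by
      intro h; exact hc0 (by rw [h, map_zero])
    have hdeg : p.natDegree ≤ k + t - 2 := tb_natDegree_le hg hdvd hp
    have hz := le_trans (card_zeros_le A p hp0) hdeg
    rw [weight_eval A p]
    have := hsplit p
    omega
  have : sInf W = n - (k + t - 2) :=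
    le_antisymm (Nat.sInf_le hmem) (le_csInf ⟨_, hmem⟩ hlb)
  rw [minDist, ← hWdef, this]
  omega
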